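/- For σ ≠ 0 with e'_V(σ)/σ > 0 and e''_E(F) > 0, the nonzero characteristic velocities of the viscoelastic system are λ = ±√(e''_E(F) + σ/(ρ*² e'_V(σ))), and these are real and nonzero. -/
import Mathlib


/-- for σ ≠ 0, e'_V(σ)/σ > 0 and e''_E(F) > 0, the nonzero
characteristic velocities are λ = ±√(e''_E(F) + σ/(ρ*² e'_V(σ))), real and nonzero. -/
theorem stmt_4 (ρ : ℝ) (hρ : 0 < ρ) (eE eV : ℝ → ℝ) (F σ : ℝ) (hσ : σ ≠ 0)
    (hE : 0 < deriv (deriv eE) F) (hV : 0 < deriv eV σ / σ)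
    (l δv δF δσ : ℝ) (hl : l ≠ 0) (hnt : ¬(δv = 0 ∧ δF = 0 ∧ δσ = 0))
    (h1 : l * ρ * δv + ρ * deriv (deriv eE) F * δF + δσ = 0)
    (h2 : l * δF + δv = 0)
    (h3 : l * ρ * (deriv eV σ / σ) * δσ + δv = 0) :
    (l = Real.sqrt (deriv (deriv eE) F + σ / (ρ ^ 2 * deriv eV σ)) ∨
      l = -Real.sqrt (deriv (deriv eE) F + σ / (ρ ^ 2 * deriv eV σ))) ∧
    Real.sqrt (deriv (deriv eE) F + σ / (ρ ^ 2 * deriv eV σ)) ≠ 0 := by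
  set a := deriv (deriv eE) F with ha
  set b := deriv eV σ / σ with hb
  have hbne : b ≠ 0 := ne_of_gt hV
  have hρne : ρ ≠ 0 := ne_of_gt hρ
  -- δσ ≠ 0
  have hδσ : δσ ≠ 0 := by
    intro h
    apply hnt
    have hv0 : δv = 0 := by rw [h] at h3; linarith
    have hF0 : δF = 0 := by
      have h2' : l * δF = 0 := by rw [hv0] at h2; linarith
      rcases mul_eq_zero.mp h2' with h' | h'
      · exact absurd h' hl
      · exact h'
    exact ⟨hv0, hF0, h⟩
  -- δv = -(l δF)
  have hv : δv = -(l * δF) := by linarith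
  -- δF = δσ * (ρ b)
  have hδF : δF = δσ * (ρ * b) := by
    have h3' : l * ρ * b * δσ + -(l * δF) = 0 := by rw [← hv]; exact h3
    have h' : l * (δσ * (ρ * b) - δF) = 0 := by linear_combination h3'
    rcases mul_eq_zero.mp h' with h'' | h''
    · exact absurd h'' hl
    · linarith
  -- characteristic equation
  have hkey2 : δσ * (a * (ρ ^ 2 * b) + 1 - l ^ 2 * (ρ ^ 2 * b)) = 0 := by
    have h1' : l * ρ * (-(l * (δσ * (ρ * b)))) + ρ * a * (δσ * (ρ * b)) + δσ = 0 := by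
      rw [← hδF, ← hv]; exact h1
    linear_combination h1'
  have hchar : a * (ρ ^ 2 * b) + 1 - l ^ 2 * (ρ ^ 2 * b) = 0 := by
    rcases mul_eq_zero.mp hkey2 with h' | h'
    · exact absurd h' hδσ
    · exact h'
  have hρ2b : ρ ^ 2 * b ≠ 0 := mul_ne_zero (pow_ne_zero 2 hρne) hbne
  have key : l ^ 2 = a + 1 / (ρ ^ 2 * b) := by
    field_simp
    nlinarith [hchar]
  -- rewrite σ/(ρ² e'_V) as 1/(ρ² b)
  have hdV : deriv eV σ ≠ 0 := by
    intro h; rw [hb, h] at hV; simp at hV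
  have heq : σ / (ρ ^ 2 * deriv eV σ) = 1 / (ρ ^ 2 * b) := by
    rw [hb]; field_simp
  rw [heq]
  have hpos : 0 < a + 1 / (ρ ^ 2 * b) := by
    have : 0 < 1 / (ρ ^ 2 * b) := by positivity
    linarith
  constructor
  · have hsq : Real.sqrt (a + 1 / (ρ ^ 2 * b)) = |l| := by
      rw [← key, Real.sqrt_sq_eq_abs]
    rcases abs_cases l with ⟨h, _⟩ | ⟨h, _⟩
    · left; rw [hsq, h]
    · right; rw [hsq, h]; ring
  · exact ne_of_gt (Real.sqrt_pos.mpr hpos)
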